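/- Let ν be a class (i) or class (ii) probability measure on [0,∞) with bounded continuous density f(x)=exp(−φ(x)), and let η be another probability measure with density g(x)=exp(−γ(x)). Suppose the limit lim_{x→∞} φ(x)/γ(x) exists and that g(x)/f(x) is bounded on every compact interval. Fix α>1. If lim_{x→∞} γ(x)/φ(x) > (α−1)/α then D^α(η|ν) < ∞, and if lim_{x→∞} γ(x)/φ(x) < (α−1)/α then D^α(η|ν) = ∞. -/

import Mathlib

open Filter MeasureTheory Set
open scoped ENNReal Topology

noncomputable section

/-- The `F`-divergence `D_F(η|ν)` between a reference density `f` and an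
alternative density `g` on `(0,∞)` (the value `⊤` encodes an infinite divergence). -/
def Ddiv (F f g : ℝ → ℝ) : ℝ≥0∞ :=
  ∫⁻ x in Set.Ioi (0 : ℝ), ENNReal.ofReal (F (g x / f x) * f x)

/-- Generator of the polynomial (α-) divergence: `F(y) = (y^α - 1)/(α(α-1))`. -/
def Falpha (α : ℝ) : ℝ → ℝ := fun y => (y ^ α - 1) / (α * (α - 1))

/-- Class (i): the log-density grows at least linearly, `lim φ(x)/x > c > 0`. -/
def IsClassI (φ : ℝ → ℝ) : Prop :=
  ∃ c : ℝ, 0 < c ∧ ∀ᶠ x in atTop, c < φ x / x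

/-- Data witnessing that a distribution with log-density `φ` (density `exp(-φ)`) is of
class (ii): heavier than exponential but lighter than any power law, together with the
auxiliary function `Φ` and the inverse `Ψ = Φ⁻¹` of its restriction to `[x̄, ∞)`. -/
structure ClassIIData (φ : ℝ → ℝ) : Type where
  xbar : ℝ
  Φ : ℝ → ℝ
  Ψ : ℝ → ℝ
  xbar_pos : 0 < xbar
  tendsto_div_id : Tendsto (fun x => φ x / x) atTop (nhds 0)
  tendsto_div_log : Tendsto (fun x => φ x / Real.log x) atTop atTop
  pos : ∀ x ∈ Set.Ici xbar, 0 < Φ x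
  strictConcave : StrictConcaveOn ℝ (Set.Ici xbar) Φ
  smooth : ContDiffOn ℝ 2 Φ (Set.Ici xbar)
  strictMono : StrictMonoOn Φ (Set.Ici xbar)
  inv_left : ∀ x ∈ Set.Ici xbar, Ψ (Φ x) = x
  inv_right : ∀ y ∈ Set.Ici (Φ xbar), Φ (Ψ y) = y
  liminf_pos : ∃ c : ℝ, 0 < c ∧ ∀ᶠ x in atTop, c ≤ Ψ (φ x) / x
  limsup_lt_top : ∃ C : ℝ, ∀ᶠ x in atTop, Ψ (φ x) / x ≤ C

namespace ClassIIData

variable {φ : ℝ → ℝ}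

/-- `ȳ = exp(Φ(x̄))`. -/
def ybar (d : ClassIIData φ) : ℝ := Real.exp (d.Φ d.xbar)

/-- The constant `a = (1+log ȳ)/(Φ⁻¹(log ȳ)^θ + θ Φ⁻¹(log ȳ)^{θ-1} (Φ⁻¹)'(log ȳ))`. -/
def aconst (d : ClassIIData φ) (θ : ℝ) : ℝ :=
  (1 + Real.log d.ybar) /
    (d.Ψ (Real.log d.ybar) ^ θ +
      θ * d.Ψ (Real.log d.ybar) ^ (θ - 1) * deriv d.Ψ (Real.log d.ybar))

/-- The constant `b = ȳ log ȳ - a ȳ Φ⁻¹(log ȳ)^θ`. -/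
def bconst (d : ClassIIData φ) (θ : ℝ) : ℝ :=
  d.ybar * Real.log d.ybar - d.aconst θ * d.ybar * d.Ψ (Real.log d.ybar) ^ θ

/-- The divergence generator `F_Φ`: `y log y` for `y ≤ ȳ` and
`a y Φ⁻¹(log y)^θ + b` for `y > ȳ`. -/
def FPhi (d : ClassIIData φ) (θ : ℝ) : ℝ → ℝ := fun y =>
  if y ≤ d.ybar then y * Real.log y
  else d.aconst θ * y * d.Ψ (Real.log y) ^ θ + d.bconst θ

/-- `ψ(x) = a Φ⁻¹(x)^θ`. -/
def psiFun (d : ClassIIData φ) (θ : ℝ) : ℝ → ℝ := fun x => d.aconst θ * d.Ψ x ^ θ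

/-- The integrand of `I(c) = ∫_c^∞ e^y (ψ(y)+ψ'(y))(ψ'(y)+ψ''(y)) f((F_Φ'(e^y)-α₁)/α₂) dy`. -/
def Iintegrand (d : ClassIIData φ) (θ α₁ α₂ : ℝ) (f : ℝ → ℝ) : ℝ → ℝ := fun y =>
  Real.exp y * (d.psiFun θ y + deriv (d.psiFun θ) y) *
    (deriv (d.psiFun θ) y + deriv (deriv (d.psiFun θ)) y) *
    f ((deriv (d.FPhi θ) (Real.exp y) - α₁) / α₂)

end ClassIIData

/-- Convex conjugate over `s ≥ 0`: `F*(x) = sup_{s ≥ 0} (x s - F(s))`. -/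
def Fstar (F : ℝ → ℝ) : ℝ → ℝ := fun x => sSup ((fun s => x * s - F s) '' Set.Ici (0 : ℝ))

/-- Pseudo-regular variation: `limsup_{c→1} limsup_{x→∞} h(cx)/h(x) = 1`,
spelled out in ε-form. -/
def PseudoRegularlyVarying (h : ℝ → ℝ) : Prop :=
  (∀ ε > (0:ℝ), ∀ᶠ c in nhds (1:ℝ), ∀ᶠ x in atTop, h (c * x) / h x ≤ 1 + ε) ∧
  (∀ ε > (0:ℝ), ∃ᶠ c in nhds (1:ℝ), ∃ᶠ x in atTop, 1 - ε ≤ h (c * x) / h x)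

/-- Proposition 3.3 (i): α-divergence balls around class (i)/(ii) models. -/
theorem stmt2
    (φ γ f g : ℝ → ℝ) (α : ℝ) (hα : 1 < α)
    (hf : ∀ x ∈ Set.Ioi (0:ℝ), f x = Real.exp (-(φ x)))
    (hg : ∀ x ∈ Set.Ioi (0:ℝ), g x = Real.exp (-(γ x)))
    (hfc : ContinuousOn f (Set.Ioi 0)) (hgc : ContinuousOn g (Set.Ioi 0))
    (hfint : ∫ x in Set.Ioi (0:ℝ), f x = 1)
    (hgint : ∫ x in Set.Ioi (0:ℝ), g x = 1)
    (hclass : IsClassI φ ∨ Nonempty (ClassIIData φ))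
    (hbdd : ∃ M : ℝ, ∀ x ∈ Set.Ioi (0:ℝ), f x ≤ M)
    (hratio : ∀ K : Set ℝ, IsCompact K → ∃ C : ℝ, ∀ x ∈ K ∩ Set.Ioi (0:ℝ), g x / f x ≤ C)
    (hlim : ∃ L : ℝ, Tendsto (fun x => φ x / γ x) atTop (nhds L)) :
    ((∃ c : ℝ, (α - 1) / α < c ∧ ∀ᶠ x in atTop, c ≤ γ x / φ x) →
        Ddiv (Falpha α) f g < ⊤) ∧
    ((∃ c : ℝ, c < (α - 1) / α ∧ ∀ᶠ x in atTop, γ x / φ x ≤ c) →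
        Ddiv (Falpha α) f g = ⊤) := by
  have hαpos : (0:ℝ) < α := lt_trans one_pos hα
  have hα1 : (0:ℝ) < α - 1 := sub_pos.2 hα
  have hD : (0:ℝ) < α * (α - 1) := mul_pos hαpos hα1
  -- pointwise formula for the integrand
  have key : ∀ x ∈ Set.Ioi (0:ℝ), Falpha α (g x / f x) * f x
      = (Real.exp ((α-1) * φ x - α * γ x) - Real.exp (-(φ x))) / (α * (α-1)) := by
    intro x hx
    have e1 : g x / f x = Real.exp (φ x - γ x) := by
      rw [hf x hx, hg x hx, ← Real.exp_sub]; congr 1; ring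
    have e2 : (g x / f x) ^ α = Real.exp ((φ x - γ x) * α) := by
      rw [e1, ← Real.exp_mul]
    have e3 : Real.exp ((φ x - γ x) * α) * Real.exp (-(φ x))
        = Real.exp ((α-1) * φ x - α * γ x) := by
      rw [← Real.exp_add]; congr 1; ring
    simp only [Falpha]
    rw [e2, hf x hx, div_mul_eq_mul_div, sub_mul, one_mul, e3]
  -- φ tends to infinity
  have hφtop : Tendsto φ atTop atTop := by
    rcases hclass with ⟨c', hc', hev'⟩ | hne
    · refine tendsto_atTop_mono' atTop ?_ (tendsto_id.const_mul_atTop hc')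
      filter_upwards [hev', eventually_gt_atTop 0] with x h1 h2
      exact le_of_lt ((lt_div_iff₀ h2).mp h1)
    · obtain ⟨d⟩ := hne
      refine tendsto_atTop_mono' atTop ?_ Real.tendsto_log_atTop
      filter_upwards [d.tendsto_div_log.eventually_ge_atTop 1, eventually_gt_atTop 1]
        with x h1 h2
      have hlog : 0 < Real.log x := Real.log_pos h2
      have := (le_div_iff₀ hlog).mp h1
      linarith
  constructor
  · -- finiteness
    rintro ⟨c, hc, hev⟩
    have hδ : 0 < α * c - (α - 1) := by
      have := (div_lt_iff₀ hαpos).mp hc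
      linarith
    set δ := α * c - (α - 1) with hδdef
    -- tail dominating integrable function
    obtain ⟨u, huev, hu_int⟩ :
        ∃ u : ℝ → ℝ, (∀ᶠ x in atTop, Real.exp (-(δ * φ x)) ≤ u x) ∧
          ∀ X : ℝ, 1 ≤ X → IntegrableOn u (Set.Ioi X) := by
      rcases hclass with ⟨c', hc', hev'⟩ | hne
      · refine ⟨fun x => Real.exp (-(δ * c') * x), ?_, fun X _ =>
          exp_neg_integrableOn_Ioi X (by positivity)⟩
        filter_upwards [hev', eventually_gt_atTop 0] with x h1 h2
        have h3 : c' * x ≤ φ x := le_of_lt ((lt_div_iff₀ h2).mp h1)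
        exact Real.exp_le_exp.mpr (by nlinarith)
      · obtain ⟨d⟩ := hne
        refine ⟨fun x => x ^ (-2 : ℝ), ?_, fun X hX =>
          integrableOn_Ioi_rpow_of_lt (by norm_num) (by linarith)⟩
        filter_upwards [d.tendsto_div_log.eventually_ge_atTop (2/δ),
          eventually_gt_atTop 1] with x h1 h2
        have hlog : 0 < Real.log x := Real.log_pos h2
        have h3 : (2/δ) * Real.log x ≤ φ x := (le_div_iff₀ hlog).mp h1
        have h4 : -(δ * φ x) ≤ (-2) * Real.log x := by
          have : 2 * Real.log x ≤ δ * φ x := by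
            have := (div_le_iff₀' hδ).mp (le_of_eq (rfl : 2/δ = 2/δ))
            calc 2 * Real.log x = δ * ((2/δ) * Real.log x) := by field_simp
              _ ≤ δ * φ x := by nlinarith
          linarith
        calc Real.exp (-(δ * φ x)) ≤ Real.exp ((-2) * Real.log x) :=
              Real.exp_le_exp.mpr h4
          _ = x ^ (-2 : ℝ) := by
              rw [Real.rpow_def_of_pos (by linarith : (0:ℝ) < x), mul_comm]
    -- choose threshold
    obtain ⟨X0, hX0⟩ := eventually_atTop.mp
      ((hev.and (hφtop.eventually_gt_atTop 0)).and huev)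
    set X := max X0 1 with hXdef
    have hX1 : (1:ℝ) ≤ X := le_max_right _ _
    have hXpos : (0:ℝ) < X := lt_of_lt_of_le one_pos hX1
    obtain ⟨M, hM⟩ := hbdd
    have hM0 : (0:ℝ) < M := by
      have h1 : (0:ℝ) < f 1 := by
        rw [hf 1 (by norm_num : (1:ℝ) ∈ Set.Ioi 0)]; exact Real.exp_pos _
      exact lt_of_lt_of_le h1 (hM 1 (by norm_num))
    obtain ⟨C, hC⟩ := hratio (Set.Icc 0 X) isCompact_Icc
    have hC0 : 0 < C := by
      have hXmem : X ∈ Set.Icc 0 X ∩ Set.Ioi (0:ℝ) :=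
        ⟨⟨hXpos.le, le_rfl⟩, hXpos⟩
      refine lt_of_lt_of_le ?_ (hC X hXmem)
      have hfX : (0:ℝ) < f X := by
        rw [hf X hXpos]; exact Real.exp_pos _
      have hgX : (0:ℝ) < g X := by
        rw [hg X hXpos]; exact Real.exp_pos _
      positivity
    -- split the integral
    have hsplit : Set.Ioi (0:ℝ) = Set.Ioc 0 X ∪ Set.Ioi X :=
      (Set.Ioc_union_Ioi_eq_Ioi hXpos.le).symm
    rw [Ddiv, hsplit, lintegral_union measurableSet_Ioi (Set.Ioc_disjoint_Ioi le_rfl)]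
    refine ENNReal.add_lt_top.mpr ⟨?_, ?_⟩
    · -- compact part
      have hbound : ∀ x ∈ Set.Ioc (0:ℝ) X,
          ENNReal.ofReal (Falpha α (g x / f x) * f x)
            ≤ ENNReal.ofReal (C ^ α * M / (α * (α-1))) := by
        intro x hx
        have hx0 : x ∈ Set.Ioi (0:ℝ) := hx.1
        have hf0 : (0:ℝ) < f x := by rw [hf x hx0]; exact Real.exp_pos _
        have hg0 : (0:ℝ) ≤ g x := by rw [hg x hx0]; exact (Real.exp_pos _).le
        have hy0 : (0:ℝ) ≤ g x / f x := div_nonneg hg0 hf0.le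
        have hyC : g x / f x ≤ C := hC x ⟨⟨hx.1.le, hx.2⟩, hx0⟩
        have hrp : (g x / f x) ^ α ≤ C ^ α :=
          Real.rpow_le_rpow hy0 hyC hαpos.le
        have hrp0 : (0:ℝ) ≤ (g x / f x) ^ α := Real.rpow_nonneg hy0 _
        refine ENNReal.ofReal_le_ofReal ?_
        have hnum : ((g x / f x) ^ α - 1) * f x ≤ C ^ α * M := by
          nlinarith [hM x hx0, hf0.le]
        calc Falpha α (g x / f x) * f x
            = ((g x / f x) ^ α - 1) * f x / (α * (α-1)) := by
              simp only [Falpha]; ring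
          _ ≤ C ^ α * M / (α * (α-1)) := by gcongr
      calc ∫⁻ x in Set.Ioc (0:ℝ) X, ENNReal.ofReal (Falpha α (g x / f x) * f x)
          ≤ ∫⁻ _ in Set.Ioc (0:ℝ) X, ENNReal.ofReal (C ^ α * M / (α * (α-1))) :=
            setLIntegral_mono' measurableSet_Ioc hbound
        _ = ENNReal.ofReal (C ^ α * M / (α * (α-1))) * volume (Set.Ioc (0:ℝ) X) :=
            setLIntegral_const _ _
        _ < ⊤ := by
            rw [Real.volume_Ioc]
            exact ENNReal.mul_lt_top ENNReal.ofReal_lt_top ENNReal.ofReal_lt_top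
    · -- tail part
      have hbound : ∀ x ∈ Set.Ioi X,
          ENNReal.ofReal (Falpha α (g x / f x) * f x)
            ≤ ENNReal.ofReal (u x / (α * (α-1))) := by
        intro x hx
        have hxX0 : X0 ≤ x := le_of_lt (lt_of_le_of_lt (le_max_left _ _) hx)
        obtain ⟨⟨hgf, hφpos⟩, hux⟩ := hX0 x hxX0
        have hx0 : x ∈ Set.Ioi (0:ℝ) := lt_trans hXpos hx
        have hγ : c * φ x ≤ γ x := (le_div_iff₀ hφpos).mp hgf
        have hA : (α-1) * φ x - α * γ x ≤ -(δ * φ x) := by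
          have : α * (c * φ x) ≤ α * γ x := by nlinarith
          simp only [hδdef]; nlinarith
        refine ENNReal.ofReal_le_ofReal ?_
        rw [key x hx0]
        have h1 : Real.exp ((α-1) * φ x - α * γ x) - Real.exp (-(φ x)) ≤ u x := by
          have := Real.exp_le_exp.mpr hA
          have := (Real.exp_pos (-(φ x))).le
          linarith
        gcongr
      calc ∫⁻ x in Set.Ioi X, ENNReal.ofReal (Falpha α (g x / f x) * f x)
          ≤ ∫⁻ x in Set.Ioi X, ENNReal.ofReal (u x / (α * (α-1))) :=
            setLIntegral_mono' measurableSet_Ioi hbound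
        _ < ⊤ := ((hu_int X hX1).div_const _).lintegral_lt_top
  · -- infiniteness
    rintro ⟨c, hc, hev⟩
    have hδ : 0 < (α - 1) - α * c := by
      have := (lt_div_iff₀ hαpos).mp hc
      linarith
    set δ := (α - 1) - α * c with hδdef
    obtain ⟨X0, hX0⟩ := eventually_atTop.mp
      (hev.and (hφtop.eventually_ge_atTop (max (1/δ) 0 + 1)))
    set X := max X0 1 with hXdef
    have hXpos : (0:ℝ) < X := lt_of_lt_of_le one_pos (le_max_right _ _)
    have hbound : ∀ x ∈ Set.Ioi X,
        ENNReal.ofReal (1 / (α * (α-1)))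
          ≤ ENNReal.ofReal (Falpha α (g x / f x) * f x) := by
      intro x hx
      have hxX0 : X0 ≤ x := le_of_lt (lt_of_le_of_lt (le_max_left _ _) hx)
      obtain ⟨hgf, hφbig⟩ := hX0 x hxX0
      have hx0 : x ∈ Set.Ioi (0:ℝ) := lt_trans hXpos hx
      have hφ0 : (0:ℝ) ≤ φ x := by
        have := le_max_right (1/δ) (0:ℝ); linarith
      have hφδ : 1/δ ≤ φ x := by
        have := le_max_left (1/δ) (0:ℝ); linarith
      have hφpos : (0:ℝ) < φ x := by
        have := le_max_right (1/δ) (0:ℝ); linarith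
      have hγ : γ x ≤ c * φ x := (div_le_iff₀ hφpos).mp hgf
      have hδφ : 1 ≤ δ * φ x := by
        have h := mul_le_mul_of_nonneg_left hφδ hδ.le
        rwa [mul_one_div, div_self hδ.ne'] at h
      have hA : δ * φ x ≤ (α-1) * φ x - α * γ x := by
        have : α * γ x ≤ α * (c * φ x) := by nlinarith
        simp only [hδdef]; nlinarith
      have h1 : (2:ℝ) ≤ Real.exp ((α-1) * φ x - α * γ x) := by
        have e1 : (1:ℝ) ≤ (α-1) * φ x - α * γ x := le_trans hδφ hA
        have := Real.add_one_le_exp (1:ℝ)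
        have := Real.exp_le_exp.mpr e1
        linarith
      have h2 : Real.exp (-(φ x)) ≤ 1 := Real.exp_le_one_iff.mpr (by linarith)
      refine ENNReal.ofReal_le_ofReal ?_
      rw [key x hx0]
      gcongr
      linarith
    refine top_le_iff.mp ?_
    calc (⊤:ℝ≥0∞) = ENNReal.ofReal (1 / (α * (α-1))) * volume (Set.Ioi X) := by
          rw [Real.volume_Ioi, ENNReal.mul_top]
          exact ne_of_gt (ENNReal.ofReal_pos.mpr (by positivity))
      _ = ∫⁻ _ in Set.Ioi X, ENNReal.ofReal (1 / (α * (α-1))) :=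
          (setLIntegral_const _ _).symm
      _ ≤ ∫⁻ x in Set.Ioi X, ENNReal.ofReal (Falpha α (g x / f x) * f x) :=
          setLIntegral_mono' measurableSet_Ioi hbound
      _ ≤ Ddiv (Falpha α) f g :=
          lintegral_mono_set (Set.Ioi_subset_Ioi hXpos.le)
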